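/- Let W be a ℂ^{N×N}-valued analytic function on a neighborhood of λ₀ ∈ ℂ, let P be the orthogonal projector onto Ker W(λ₀), and suppose Z = W'(λ₀)·P + W(λ₀)·(I − P) is invertible. Let ζ be a ℂ^{N×N}-valued analytic function on a neighborhood of λ₀ with ζ(λ₀)·P = 0. Then there exist a neighborhood U of λ₀ and an analytic matrix-valued function H on U such that for every λ ∈ U with λ ≠ λ₀ the matrix W(λ) is invertible and H(λ) = ζ(λ)·W(λ)⁻¹; i.e., ζ(λ)·W(λ)⁻¹ extends analytically across λ₀. -/

import Mathlib

open Matrix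

private lemma aux_analyticAt_dslope {f : ℂ → ℂ} {a z : ℂ}
    (ha : AnalyticAt ℂ f a) (hz : AnalyticAt ℂ f z) :
    AnalyticAt ℂ (dslope f a) z := by
  rcases eq_or_ne z a with rfl | h
  · obtain ⟨p, hp⟩ := ha
    exact ⟨_, hp.has_fpower_series_dslope_fslope⟩
  · have h1 : AnalyticAt ℂ (fun w => (w - a)⁻¹ * (f w - f a)) z := by
      exact ((analyticAt_id.sub analyticAt_const).inv (sub_ne_zero.mpr h)).mul
        (hz.sub analyticAt_const)
    refine h1.congr ?_
    filter_upwards [isOpen_ne.eventually_mem (x := z) h] with w hw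
    rw [dslope_of_ne f hw, slope_def_field, div_eq_inv_mul]

private lemma aux_analyticAt_det {n : ℕ} {M : ℂ → Matrix (Fin n) (Fin n) ℂ} {z : ℂ}
    (h : ∀ i j, AnalyticAt ℂ (fun w => M w i j) z) :
    AnalyticAt ℂ (fun w => (M w).det) z := by
  simp only [Matrix.det_apply']
  exact Finset.analyticAt_fun_sum _ fun σ _ =>
    analyticAt_const.mul (Finset.analyticAt_fun_prod _ fun i _ => h (σ i) i)

private lemma aux_analyticAt_inv_entry {n : ℕ} {M : ℂ → Matrix (Fin n) (Fin n) ℂ} {z : ℂ}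
    (h : ∀ i j, AnalyticAt ℂ (fun w => M w i j) z)
    (hd : (M z).det ≠ 0) (i j : Fin n) :
    AnalyticAt ℂ (fun w => (M w)⁻¹ i j) z := by
  have key : ∀ w, (M w)⁻¹ i j = ((M w).det)⁻¹ * (M w).adjugate i j := by
    intro w
    rw [Matrix.inv_def, Ring.inverse_eq_inv', Matrix.smul_apply, smul_eq_mul]
  simp only [key]
  refine (((aux_analyticAt_det h).inv hd).mul ?_)
  have : ∀ w, (M w).adjugate i j = ((M w).updateRow j (Pi.single i 1)).det :=
    fun w => Matrix.adjugate_apply _ i j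
  simp only [this]
  apply aux_analyticAt_det
  intro a b
  by_cases hne : a = j
  · simp only [Matrix.updateRow_apply, hne, if_true]
    exact analyticAt_const
  · simp only [Matrix.updateRow_apply, hne, if_false]
    exact h a b

private lemma aux_analyticAt_mul_entry {n : ℕ} {M K : ℂ → Matrix (Fin n) (Fin n) ℂ} {z : ℂ}
    (hM : ∀ i j, AnalyticAt ℂ (fun w => M w i j) z)
    (hK : ∀ i j, AnalyticAt ℂ (fun w => K w i j) z) (i j : Fin n) :
    AnalyticAt ℂ (fun w => (M w * K w) i j) z := by
  simp only [Matrix.mul_apply]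
  exact Finset.analyticAt_fun_sum _ fun k _ => (hM i k).mul (hK k j)

/-- If `W` is analytic near `λ₀`, `P` is the orthogonal projector onto
`Ker W(λ₀)`, `Z = W'(λ₀)P + W(λ₀)(I-P)` is invertible, and `ζ` is analytic near `λ₀` with
`ζ(λ₀)P = 0`, then `ζ(λ)W(λ)⁻¹` extends analytically across `λ₀` (and `W(λ)` is invertible
for `λ ≠ λ₀` near `λ₀`). -/
theorem zeta_W_inv_extends_analytically {N : ℕ} (hN : 1 ≤ N) (lam0 : ℂ)
    (W ζ : ℂ → Matrix (Fin N) (Fin N) ℂ) (W' P : Matrix (Fin N) (Fin N) ℂ)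
    (hW : ∀ i j, AnalyticAt ℂ (fun z => W z i j) lam0)
    (hW' : ∀ i j, HasDerivAt (fun z => W z i j) (W' i j) lam0)
    (hPH : Pᴴ = P) (hP2 : P * P = P)
    (hPker : ∀ v : Fin N → ℂ, W lam0 *ᵥ v = 0 ↔ P *ᵥ v = v)
    (hZ : IsUnit (W' * P + W lam0 * (1 - P)))
    (hζ : ∀ i j, AnalyticAt ℂ (fun z => ζ z i j) lam0)
    (hζP : ζ lam0 * P = 0) :
    ∃ U : Set ℂ, IsOpen U ∧ lam0 ∈ U ∧
      ∃ H : ℂ → Matrix (Fin N) (Fin N) ℂ,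
        (∀ i j, ∀ z ∈ U, AnalyticAt ℂ (fun w => H w i j) z) ∧
        ∀ z ∈ U, z ≠ lam0 → IsUnit (W z) ∧ H z = ζ z * (W z)⁻¹ := by
  classical
  -- Key algebraic fact : W(λ₀) P = 0
  have hWP : W lam0 * P = 0 := by
    ext i j
    have h1 : (W lam0 * P) *ᵥ (Pi.single j 1) = 0 := by
      rw [← Matrix.mulVec_mulVec]
      apply (hPker _).mpr
      rw [Matrix.mulVec_mulVec, hP2]
    have := congrFun h1 i
    simpa [Matrix.mulVec_single] using this
  -- The matrices R, S, A, H
  set R : ℂ → Matrix (Fin N) (Fin N) ℂ :=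
    fun w i j => dslope (fun z => W z i j) lam0 w with hRdef
  set S : ℂ → Matrix (Fin N) (Fin N) ℂ :=
    fun w i j => dslope (fun z => (ζ z * P) i j) lam0 w with hSdef
  set A : ℂ → Matrix (Fin N) (Fin N) ℂ := fun w => R w * P + W w * (1 - P) with hAdef
  set H : ℂ → Matrix (Fin N) (Fin N) ℂ := fun w => (S w + ζ w * (1 - P)) * (A w)⁻¹ with hHdef
  -- entrywise analyticity of ζ * P at lam0
  have hζP_an : ∀ i j, AnalyticAt ℂ (fun z => (ζ z * P) i j) lam0 := by
    intro i j
    simp only [Matrix.mul_apply]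
    exact Finset.analyticAt_fun_sum _ fun k _ => (hζ i k).mul analyticAt_const
  -- R at lam0 is W'
  have hR0 : R lam0 = W' := by
    ext i j
    rw [hRdef]
    simp only [dslope_same]
    exact (hW' i j).deriv
  -- det A lam0 ≠ 0
  have hA0 : A lam0 = W' * P + W lam0 * (1 - P) := by
    show R lam0 * P + W lam0 * (1 - P) = _
    rw [hR0]
  have hdetA0 : (A lam0).det ≠ 0 := by
    rw [hA0]
    exact (Matrix.isUnit_iff_isUnit_det _ |>.mp hZ).ne_zero
  -- entrywise analyticity of R, A at lam0
  have hRan0 : ∀ i j, AnalyticAt ℂ (fun w => R w i j) lam0 :=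
    fun i j => aux_analyticAt_dslope (hW i j) (hW i j)
  have hAan0 : ∀ i j, AnalyticAt ℂ (fun w => A w i j) lam0 := by
    intro i j
    have h1 := aux_analyticAt_mul_entry (K := fun _ => P) hRan0
      (fun _ _ => analyticAt_const) i j
    have h2 := aux_analyticAt_mul_entry (K := fun _ => (1 - P)) hW
      (fun _ _ => analyticAt_const) i j
    exact h1.add h2
  -- choose the neighbourhood
  have hev : ∀ᶠ z in nhds lam0,
      (∀ i j, AnalyticAt ℂ (fun w => W w i j) z) ∧
      (∀ i j, AnalyticAt ℂ (fun w => ζ w i j) z) ∧ (A z).det ≠ 0 := by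
    have h1 : ∀ᶠ z in nhds lam0, ∀ i j, AnalyticAt ℂ (fun w => W w i j) z := by
      rw [Filter.eventually_all]
      intro i
      rw [Filter.eventually_all]
      intro j
      exact (hW i j).eventually_analyticAt
    have h2 : ∀ᶠ z in nhds lam0, ∀ i j, AnalyticAt ℂ (fun w => ζ w i j) z := by
      rw [Filter.eventually_all]
      intro i
      rw [Filter.eventually_all]
      intro j
      exact (hζ i j).eventually_analyticAt
    have h3 : ∀ᶠ z in nhds lam0, (A z).det ≠ 0 :=
      (aux_analyticAt_det hAan0).continuousAt.eventually_ne hdetA0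
    exact h1.and (h2.and h3)
  obtain ⟨U, hUprop, hUopen, hU0⟩ := eventually_nhds_iff.mp hev
  refine ⟨U, hUopen, hU0, H, ?_, ?_⟩
  · -- analyticity of H on U
    intro i j z hz
    obtain ⟨hWz, hζz, hdz⟩ := hUprop z hz
    have hRz : ∀ i j, AnalyticAt ℂ (fun w => R w i j) z :=
      fun i j => aux_analyticAt_dslope (hW i j) (hWz i j)
    have hAz : ∀ i j, AnalyticAt ℂ (fun w => A w i j) z := fun i j =>
      (aux_analyticAt_mul_entry (K := fun _ => P) hRz
        (fun _ _ => analyticAt_const) i j).add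
      (aux_analyticAt_mul_entry (K := fun _ => (1 - P)) hWz
        (fun _ _ => analyticAt_const) i j)
    have hζPz : ∀ i j, AnalyticAt ℂ (fun w => (ζ w * P) i j) z := by
      intro i j
      simp only [Matrix.mul_apply]
      exact Finset.analyticAt_fun_sum _ fun k _ => (hζz i k).mul analyticAt_const
    have hSz : ∀ i j, AnalyticAt ℂ (fun w => S w i j) z :=
      fun i j => aux_analyticAt_dslope (hζP_an i j) (hζPz i j)
    exact aux_analyticAt_mul_entry
      (fun i j => (hSz i j).add
        (aux_analyticAt_mul_entry (K := fun _ => (1 - P)) hζz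
          (fun _ _ => analyticAt_const) i j))
      (fun i j => aux_analyticAt_inv_entry hAz hdz i j) i j
  · -- invertibility and the identity for z ≠ lam0
    intro z hz hzne
    obtain ⟨hWz, hζz, hdz⟩ := hUprop z hz
    have hsub : z - lam0 ≠ 0 := sub_ne_zero.mpr hzne
    -- W z = W lam0 + (z - lam0) • R z
    have hWR : W z = W lam0 + (z - lam0) • R z := by
      ext i j
      have h1 : R z i j = (W z i j - W lam0 i j) / (z - lam0) :=
        (dslope_of_ne (fun w => W w i j) hzne).trans
          (slope_def_field (fun w => W w i j) lam0 z)
      rw [Matrix.add_apply, Matrix.smul_apply, h1, smul_eq_mul,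
        mul_div_assoc', mul_div_cancel_left₀ _ hsub]
      ring
    have hWzP : W z * P = (z - lam0) • (R z * P) := by
      rw [hWR, add_mul, hWP, zero_add, Matrix.smul_mul]
    -- ζ z * P = (z - lam0) • S z
    have hζzP : ζ z * P = (z - lam0) • S z := by
      ext i j
      have h2 : S z i j = ((ζ z * P) i j - (ζ lam0 * P) i j) / (z - lam0) :=
        (dslope_of_ne (fun w => (ζ w * P) i j) hzne).trans
          (slope_def_field (fun w => (ζ w * P) i j) lam0 z)
      rw [hζP] at h2
      rw [Matrix.smul_apply, h2, smul_eq_mul, Matrix.zero_apply, sub_zero,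
        mul_div_assoc', mul_div_cancel_left₀ _ hsub]
    -- B is the explicit right factor of the inverse
    set B : Matrix (Fin N) (Fin N) ℂ := (z - lam0)⁻¹ • P + (1 - P) with hBdef
    have hWB : W z * B = A z := by
      rw [hBdef, Matrix.mul_add, Matrix.mul_smul, hWzP, smul_smul,
        inv_mul_cancel₀ hsub, one_smul]
    have hAinv : A z * (A z)⁻¹ = 1 := Matrix.mul_nonsing_inv _ (Ne.isUnit hdz)
    have hright : W z * (B * (A z)⁻¹) = 1 := by
      rw [← Matrix.mul_assoc, hWB, hAinv]
    have hWunit : IsUnit (W z) := by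
      rw [Matrix.isUnit_iff_isUnit_det]
      have : (W z).det * (B * (A z)⁻¹).det = 1 := by
        rw [← Matrix.det_mul, hright, Matrix.det_one]
      exact IsUnit.of_mul_eq_one _ this
    refine ⟨hWunit, ?_⟩
    have hWinv : (W z)⁻¹ = B * (A z)⁻¹ := Matrix.inv_eq_right_inv hright
    have hζB : ζ z * B = S z + ζ z * (1 - P) := by
      rw [hBdef, Matrix.mul_add, Matrix.mul_smul, hζzP, smul_smul,
        inv_mul_cancel₀ hsub, one_smul]
    rw [hWinv, ← Matrix.mul_assoc, hζB]
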